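/- Let N ≥ 1 and let ρ be any complex matrix indexed by (Fin N → Fin 2). Then (1/3^N) · Σ_{P : Fin N → {X,Y,Z}} Σ_{b : Fin N → {0,1}} w_ρ(P,b) · S(P,b) = ρ. (N-qubit unbiasedness of Pauli-based classical shadows: the Born-weighted average of the inverse snapshots over all basis choices and outcomes recovers the state exactly.) -/

import Mathlib

open Matrix BigOperators

noncomputable section

/-- The eigenvectors `e(P,s)` of the Pauli matrices, with the index `0 ↦ X`, `1 ↦ Y`, `2 ↦ Z`. -/
def evec : Fin 3 → Fin 2 → Fin 2 → ℂ
  | 0, s => fun a => (1 / (Real.sqrt 2 : ℂ)) * (if a = 1 then (-1 : ℂ) ^ (s : ℕ) else 1)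
  | 1, s => fun a => (1 / (Real.sqrt 2 : ℂ)) * (if a = 1 then (-1 : ℂ) ^ (s : ℕ) * Complex.I else 1)
  | 2, s => fun a => if a = s then 1 else 0

/-- The outer product `|v⟩⟨v|`, with entries `v a * conj (v b)`. -/
def outer {n : Type*} (v : n → ℂ) : Matrix n n ℂ :=
  Matrix.of fun a b => v a * (starRingEnd ℂ) (v b)

/-- The tensor product `⊗_j A_j` of 2×2 matrices, as a matrix indexed by `Fin N → Fin 2`. -/
def tensorProd {N : ℕ} (A : Fin N → Matrix (Fin 2) (Fin 2) ℂ) :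
    Matrix (Fin N → Fin 2) (Fin N → Fin 2) ℂ :=
  Matrix.of fun x y => ∏ j, A j (x j) (y j)

/-- The product basis vector `e(P,b)` with entries `∏_j e(P_j,b_j)(x_j)`. -/
def pvec {N : ℕ} (P : Fin N → Fin 3) (b : Fin N → Fin 2) : (Fin N → Fin 2) → ℂ :=
  fun x => ∏ j, evec (P j) (b j) (x j)

/-- The Born-rule outcome weight `w_ρ(P,b) = ⟨e(P,b)|ρ|e(P,b)⟩`. -/
def wgt {N : ℕ} (ρ : Matrix (Fin N → Fin 2) (Fin N → Fin 2) ℂ)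
    (P : Fin N → Fin 3) (b : Fin N → Fin 2) : ℂ :=
  ∑ x, ∑ y, (starRingEnd ℂ) (pvec P b x) * ρ x y * pvec P b y

/-- The inverse snapshot `S(P,b) = ⊗_j (3·|e(P_j,b_j)⟩⟨e(P_j,b_j)| − I₂)`. -/
def snapshot {N : ℕ} (P : Fin N → Fin 3) (b : Fin N → Fin 2) :
    Matrix (Fin N → Fin 2) (Fin N → Fin 2) ℂ :=
  tensorProd (fun j => (3 : ℂ) • outer (evec (P j) (b j)) - 1)

lemma evec0 (s a : Fin 2) :
    evec 0 s a = (1 / (Real.sqrt 2 : ℂ)) * (if a = 1 then (-1 : ℂ) ^ (s : ℕ) else 1) := rfl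
lemma evec1 (s a : Fin 2) :
    evec 1 s a = (1 / (Real.sqrt 2 : ℂ)) * (if a = 1 then (-1 : ℂ) ^ (s : ℕ) * Complex.I else 1) := rfl
lemma evec2 (s a : Fin 2) : evec 2 s a = if a = s then 1 else 0 := rfl

set_option maxHeartbeats 2000000 in
lemma single (u v x y : Fin 2) :
    ∑ p : Fin 3, ∑ s : Fin 2,
      (starRingEnd ℂ) (evec p s u) * evec p s v *
        ((3:ℂ) * (evec p s x * (starRingEnd ℂ) (evec p s y)) - if x = y then 1 else 0)
    = 3 * ((if x = u then (1:ℂ) else 0) * if y = v then 1 else 0) := by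
  have h : Real.sqrt 2 / 2 * (Real.sqrt 2 / 2) = 1/2 := by
    rw [div_mul_div_comm, Real.mul_self_sqrt (by norm_num)]; norm_num
  rw [Fin.sum_univ_three]
  simp only [Fin.sum_univ_two, evec0, evec1, evec2]
  fin_cases u <;> fin_cases v <;> fin_cases x <;> fin_cases y <;>
    norm_num [Complex.ext_iff, Complex.conj_I, h]

lemma prod_delta {N : ℕ} (x u : Fin N → Fin 2) :
    (∏ j, if x j = u j then (1:ℂ) else 0) = if x = u then 1 else 0 := by
  by_cases h : x = u
  · simp [h]
  · obtain ⟨j, hj⟩ := Function.ne_iff.mp h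
    rw [if_neg h]
    exact Finset.prod_eq_zero (Finset.mem_univ j) (if_neg hj)

lemma sum4_comm {α β γ δ : Type*} [Fintype α] [Fintype β] [Fintype γ] [Fintype δ]
    (f : α → β → γ → δ → ℂ) :
    ∑ a, ∑ b, ∑ c, ∑ d, f a b c d = ∑ c, ∑ d, ∑ a, ∑ b, f a b c d := by
  have h1 : ∀ a, ∑ b, ∑ c, ∑ d, f a b c d = ∑ c, ∑ d, ∑ b, f a b c d := by
    intro a
    rw [Finset.sum_comm]
    exact Finset.sum_congr rfl fun c _ => Finset.sum_comm
  simp only [h1]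
  rw [Finset.sum_comm]
  exact Finset.sum_congr rfl fun c _ => Finset.sum_comm

/-- N-qubit unbiasedness of Pauli-based classical shadows: the Born-weighted average of the
inverse snapshots over all basis choices and outcomes recovers the state exactly:
`(1/3^N) · Σ_P Σ_b w_ρ(P,b) · S(P,b) = ρ`. -/
theorem pauli_shadow_unbiased {N : ℕ} (hN : 1 ≤ N)
    (ρ : Matrix (Fin N → Fin 2) (Fin N → Fin 2) ℂ) :
    (1 / 3 ^ N : ℂ) • ∑ P : Fin N → Fin 3, ∑ b : Fin N → Fin 2,
      wgt ρ P b • snapshot P b = ρ := by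
  ext x y
  simp only [Matrix.smul_apply, Matrix.sum_apply, smul_eq_mul]
  have key : ∀ (P : Fin N → Fin 3) (b : Fin N → Fin 2),
      wgt ρ P b * snapshot P b x y
      = ∑ u, ∑ v, ρ u v * ∏ j,
          ((starRingEnd ℂ) (evec (P j) (b j) (u j)) * evec (P j) (b j) (v j) *
            ((3:ℂ) * (evec (P j) (b j) (x j) * (starRingEnd ℂ) (evec (P j) (b j) (y j)))
              - if x j = y j then 1 else 0)) := by
    intro P b
    unfold wgt snapshot tensorProd pvec
    rw [Finset.sum_mul]
    refine Finset.sum_congr rfl fun u _ => ?_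
    rw [Finset.sum_mul]
    refine Finset.sum_congr rfl fun v _ => ?_
    simp only [Matrix.of_apply, map_prod]
    rw [Finset.prod_mul_distrib, Finset.prod_mul_distrib]
    have : ∀ j : Fin N, ((3 : ℂ) • outer (evec (P j) (b j)) - 1) (x j) (y j)
        = (3:ℂ) * (evec (P j) (b j) (x j) * (starRingEnd ℂ) (evec (P j) (b j) (y j)))
          - if x j = y j then 1 else 0 := by
      intro j
      simp [outer, Matrix.sub_apply, Matrix.smul_apply, Matrix.one_apply, smul_eq_mul, mul_assoc]
    rw [Finset.prod_congr rfl fun j _ => this j]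
    ring
  rw [Finset.sum_congr rfl fun P _ => Finset.sum_congr rfl fun b _ => key P b]
  -- reorder sums: Σ_P Σ_b Σ_u Σ_v → Σ_u Σ_v Σ_P Σ_b
  rw [sum4_comm]
  -- pull ρ u v out and factor the (P,b)-sums into products over j
  have key2 : ∀ u v : Fin N → Fin 2,
      (∑ P : Fin N → Fin 3, ∑ b : Fin N → Fin 2, ρ u v * ∏ j,
          ((starRingEnd ℂ) (evec (P j) (b j) (u j)) * evec (P j) (b j) (v j) *
            ((3:ℂ) * (evec (P j) (b j) (x j) * (starRingEnd ℂ) (evec (P j) (b j) (y j)))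
              - if x j = y j then 1 else 0)))
      = ρ u v * ((3:ℂ)^N * ((if x = u then 1 else 0) * if y = v then 1 else 0)) := by
    intro u v
    simp only [← Finset.mul_sum]
    congr 1
    calc (∑ P : Fin N → Fin 3, ∑ b : Fin N → Fin 2, ∏ j,
          ((starRingEnd ℂ) (evec (P j) (b j) (u j)) * evec (P j) (b j) (v j) *
            ((3:ℂ) * (evec (P j) (b j) (x j) * (starRingEnd ℂ) (evec (P j) (b j) (y j)))
              - if x j = y j then 1 else 0)))
        = ∑ P : Fin N → Fin 3, ∏ j, ∑ s : Fin 2,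
          ((starRingEnd ℂ) (evec (P j) s (u j)) * evec (P j) s (v j) *
            ((3:ℂ) * (evec (P j) s (x j) * (starRingEnd ℂ) (evec (P j) s (y j)))
              - if x j = y j then 1 else 0)) := by
          refine Finset.sum_congr rfl fun P _ => ?_
          rw [Finset.prod_univ_sum, Fintype.piFinset_univ]
      _ = ∏ j, ∑ p : Fin 3, ∑ s : Fin 2,
          ((starRingEnd ℂ) (evec p s (u j)) * evec p s (v j) *
            ((3:ℂ) * (evec p s (x j) * (starRingEnd ℂ) (evec p s (y j)))
              - if x j = y j then 1 else 0)) := by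
          rw [Finset.prod_univ_sum, Fintype.piFinset_univ]
      _ = ∏ j, (3:ℂ) * ((if x j = u j then (1:ℂ) else 0) * if y j = v j then 1 else 0) := by
          exact Finset.prod_congr rfl fun j _ => single (u j) (v j) (x j) (y j)
      _ = (3:ℂ)^N * ((if x = u then 1 else 0) * if y = v then 1 else 0) := by
          rw [Finset.prod_mul_distrib, Finset.prod_mul_distrib, Finset.prod_const,
            prod_delta, prod_delta, Finset.card_univ, Fintype.card_fin]
  rw [Finset.sum_congr rfl fun u (_ : u ∈ Finset.univ) =>
    Finset.sum_congr rfl fun v (_ : v ∈ Finset.univ) => key2 u v]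
  have h3 : (3:ℂ)^N ≠ 0 := pow_ne_zero _ (by norm_num)
  simp only [mul_ite, mul_one, mul_zero, ite_mul, zero_mul]
  rw [Finset.sum_eq_single x, Finset.sum_eq_single y]
  · simp only [if_pos rfl, if_true]
    field_simp
  · intro v _ hv; simp [Ne.symm hv]
  · intro hx; exact absurd (Finset.mem_univ y) hx
  · intro u _ hu
    rw [Finset.sum_eq_zero]
    intro v _; simp [Ne.symm hu]
  · intro hx; exact absurd (Finset.mem_univ x) hx
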